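/- Let Λ ⊂ h be an even lattice with dual Λ*, s a section of Λ* → Λ*/Λ with s(Λ)=0, k(μ,ν) = s(μ+ν) - s(μ) - s(ν) ∈ Λ the associated 2-cocycle, and ε : Λ × Λ → ℂ× a normalised 2-cocycle with commutator function (-1)^{⟨α,β⟩}. Define Ω(α,β) = e^{iπ⟨s(α),s(β)⟩} and F(α,β,γ) = (-1)^{⟨s(α), k(β,γ)⟩} · ε(k(α,β), k(α+β,γ)) / ε(k(β,γ), k(α,β+γ)) for α,β,γ ∈ Λ*/Λ. Then (F, Ω) is an abelian 3-cocycle on Λ*/Λ: F satisfies the 3-cocycle identity and (F, Ω) satisfies the two hexagon identities. -/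

import Mathlib

set_option maxHeartbeats 2000000


/-- Let `Λ` be an even lattice in a real vector space `V` with
symmetric bilinear form `B`, `dual = Λ*`, `s` a section of `V → V ⧸ Λ` with
`s(Λ) = 0`, `k(α,β) = s(α+β) - s(α) - s(β) ∈ Λ` the associated 2-cocycle, and
`ε` a normalised 2-cocycle on `Λ` with commutator function `(-1)^{B(a,b)}`.
Define `Ω(α,β) = e^{iπ B(s α, s β)}` and
`F(α,β,γ) = e^{iπ B(s α, k(β,γ))} · ε(k(α,β), k(α+β,γ)) / ε(k(β,γ), k(α,β+γ))`.
Then `(F, Ω)` is an abelian 3-cocycle on `Λ*/Λ`: `F` satisfies the 3-cocycle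
identity and `(F, Ω)` satisfies the two hexagon identities (on cosets of dual
vectors). -/
theorem stmt9 {V : Type*} [AddCommGroup V] [Module ℝ V]
    (B : V →ₗ[ℝ] V →ₗ[ℝ] ℝ)
    (hsymm : ∀ x y, B x y = B y x)
    (Λ dual : AddSubgroup V)
    (hdual : ∀ μ, μ ∈ dual ↔ ∀ l ∈ Λ, ∃ n : ℤ, B μ l = (n : ℝ))
    (hΛd : Λ ≤ dual)
    (heven : ∀ a ∈ Λ, ∃ n : ℤ, B a a = 2 * (n : ℝ))
    (s : V ⧸ Λ → V)
    (hs : ∀ x : V, s (QuotientAddGroup.mk x) - x ∈ Λ)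
    (hs0 : s 0 = 0)
    (ε : V → V → ℂ) (hεne : ∀ a b, ε a b ≠ 0)
    (hεnorm : ∀ a, ε a 0 = 1 ∧ ε 0 a = 1)
    (hεcoc : ∀ a b c, a ∈ Λ → b ∈ Λ → c ∈ Λ →
      ε b c * (ε (a + b) c)⁻¹ * ε a (b + c) * (ε a b)⁻¹ = 1)
    (hεcomm : ∀ a b, a ∈ Λ → b ∈ Λ → ∀ n : ℤ, B a b = (n : ℝ) →
      ε a b = (-1 : ℂ) ^ n * ε b a) :
    let k : V ⧸ Λ → V ⧸ Λ → V := fun α β => s (α + β) - s α - s β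
    let Ω : V ⧸ Λ → V ⧸ Λ → ℂ := fun α β =>
      Complex.exp ((Real.pi : ℂ) * Complex.I * (B (s α) (s β) : ℝ))
    let F : V ⧸ Λ → V ⧸ Λ → V ⧸ Λ → ℂ := fun α β γ =>
      Complex.exp ((Real.pi : ℂ) * Complex.I * (B (s α) (k β γ) : ℝ)) *
        ε (k α β) (k (α + β) γ) / ε (k β γ) (k α (β + γ))
    (∀ α β γ δ : V ⧸ Λ,
      (∃ x ∈ dual, QuotientAddGroup.mk x = α) →
      (∃ x ∈ dual, QuotientAddGroup.mk x = β) →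
      (∃ x ∈ dual, QuotientAddGroup.mk x = γ) →
      (∃ x ∈ dual, QuotientAddGroup.mk x = δ) →
      F (α + β) γ δ * F α β (γ + δ) = F α β γ * F α (β + γ) δ * F β γ δ) ∧
    (∀ α β γ : V ⧸ Λ,
      (∃ x ∈ dual, QuotientAddGroup.mk x = α) →
      (∃ x ∈ dual, QuotientAddGroup.mk x = β) →
      (∃ x ∈ dual, QuotientAddGroup.mk x = γ) →
      (F β γ α)⁻¹ * Ω α (β + γ) * (F α β γ)⁻¹ = Ω α γ * (F β α γ)⁻¹ * Ω α β) ∧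
    (∀ α β γ : V ⧸ Λ,
      (∃ x ∈ dual, QuotientAddGroup.mk x = α) →
      (∃ x ∈ dual, QuotientAddGroup.mk x = β) →
      (∃ x ∈ dual, QuotientAddGroup.mk x = γ) →
      F γ α β * Ω (α + β) γ * F α β γ = Ω α γ * F α γ β * Ω β γ) := by
  have kmem : ∀ α β : V ⧸ Λ, s (α + β) - s α - s β ∈ Λ := by
    intro α β
    obtain ⟨x, rfl⟩ := QuotientAddGroup.mk_surjective α
    obtain ⟨y, rfl⟩ := QuotientAddGroup.mk_surjective β
    have h1 := hs (x + y)
    have h2 := hs x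
    have h3 := hs y
    rw [QuotientAddGroup.mk_add] at h1
    have heq : s (QuotientAddGroup.mk x + QuotientAddGroup.mk y) - s (QuotientAddGroup.mk x)
        - s (QuotientAddGroup.mk y)
        = (s (QuotientAddGroup.mk x + QuotientAddGroup.mk y) - (x + y))
          - (s (QuotientAddGroup.mk x) - x) - (s (QuotientAddGroup.mk y) - y) := by abel
    rw [heq]
    exact AddSubgroup.sub_mem _ (AddSubgroup.sub_mem _ h1 h2) h3
  have hA : ∀ a b c, a ∈ Λ → b ∈ Λ → c ∈ Λ →
      ε a b * ε (a + b) c = ε b c * ε a (b + c) := by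
    intro a b c ha hb hc
    have h := hεcoc a b c ha hb hc
    field_simp at h
    rw [div_eq_one_iff_eq (by exact mul_ne_zero (hεne _ _) (hεne _ _))] at h
    linear_combination -h
  have eint : ∀ m : ℤ, Complex.exp ((Real.pi : ℂ) * Complex.I * ((m : ℝ) : ℂ)) = (-1 : ℂ) ^ m := by
    intro m
    rw [show (Real.pi : ℂ) * Complex.I * ((m : ℝ) : ℂ) = (m : ℂ) * ((Real.pi : ℂ) * Complex.I) by
      push_cast; ring, Complex.exp_int_mul, Complex.exp_pi_mul_I]
  intro k Ω F
  refine ⟨?_, ?_, ?_⟩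
  · -- pentagon
    intro α β γ δ hα hβ hγ hδ
    simp only [F, k, Ω]
    clear F Ω k
    simp only [← add_assoc]
    set p := s (α+β) - s α - s β with hp
    set q := s (α+β+γ) - s (α+β) - s γ with hq
    set r := s (α+β+γ+δ) - s (α+β+γ) - s δ with hr
    set u := s (β+γ) - s β - s γ with hu
    set v := s (γ+δ) - s γ - s δ with hv
    set w := s (β+γ+δ) - s β - s (γ+δ) with hw
    have hpm : p ∈ Λ := kmem α β
    have hqm : q ∈ Λ := kmem (α+β) γ
    have hrm : r ∈ Λ := kmem (α+β+γ) δ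
    have hum : u ∈ Λ := kmem β γ
    have hvm : v ∈ Λ := kmem γ δ
    have hwm : w ∈ Λ := by have h := kmem β (γ+δ); rwa [← add_assoc] at h
    clear_value p q r u v w
    rw [show s (α+β+γ+δ) - s (α+β) - s (γ+δ) = q + r - v from by rw [hq, hr, hv]; abel,
        show s (α+β+γ+δ) - s α - s (β+γ+δ) = p + q + r - v - w from by
          rw [hp, hq, hr, hv, hw]; abel,
        show s (α+β+γ) - s α - s (β+γ) = p + q - u from by rw [hp, hq, hu]; abel,
        show s (β+γ+δ) - s (β+γ) - s δ = v + w - u from by rw [hv, hw, hu]; abel]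
    have hqrv : q + r - v ∈ Λ := AddSubgroup.sub_mem _ (AddSubgroup.add_mem _ hqm hrm) hvm
    have hpqu : p + q - u ∈ Λ := AddSubgroup.sub_mem _ (AddSubgroup.add_mem _ hpm hqm) hum
    have hvwu : v + w - u ∈ Λ := AddSubgroup.sub_mem _ (AddSubgroup.add_mem _ hvm hwm) hum
    have hZ : p + q + r - v - w ∈ Λ := AddSubgroup.sub_mem _ (AddSubgroup.sub_mem _
      (AddSubgroup.add_mem _ (AddSubgroup.add_mem _ hpm hqm) hrm) hvm) hwm
    obtain ⟨n, hn⟩ := (hdual p).1 (hΛd hpm) v hvm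
    set c := (-1 : ℂ) ^ n with hcdef
    have hc : c = 1 ∨ c = -1 := by
      rcases Int.even_or_odd n with h | h
      · left; exact h.neg_one_zpow
      · right; exact h.neg_one_zpow
    have hn' : B (s (α+β)) v - B (s α) v - B (s β) v = (n : ℝ) := by
      rw [hp] at hn
      simpa only [map_sub, LinearMap.sub_apply] using hn
    have hre : B (s (α+β)) v + B (s α) w
        = (n : ℝ) + B (s α) u + B (s α) (v + w - u) + B (s β) v := by
      simp only [map_add, map_sub]
      linarith [hn']
    have h1 : Complex.exp ((Real.pi : ℂ) * Complex.I * (B (s (α+β)) v : ℝ)) *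
        Complex.exp ((Real.pi : ℂ) * Complex.I * (B (s α) w : ℝ))
        = c * (Complex.exp ((Real.pi : ℂ) * Complex.I * (B (s α) u : ℝ)) *
          Complex.exp ((Real.pi : ℂ) * Complex.I * (B (s α) (v + w - u) : ℝ)) *
          Complex.exp ((Real.pi : ℂ) * Complex.I * (B (s β) v : ℝ))) := by
      rw [hcdef, ← eint n, ← Complex.exp_add, ← Complex.exp_add, ← Complex.exp_add,
        ← Complex.exp_add]
      congr 1
      have hcre := congrArg Complex.ofReal hre
      push_cast at hcre ⊢
      linear_combination ((Real.pi : ℂ) * Complex.I) * hcre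
    -- ε-lemmas
    have a2a : ε v p * ε (p+v) (q+r-v) = ε p (q+r-v) * ε v (p+q+r-v) := by
      have h := hA v p (q+r-v) hvm hpm hqrv
      rw [show v + p = p + v from by abel, show p + (q+r-v) = p+q+r-v from by abel] at h
      exact h
    have a2b : ε p v * ε (p+v) (q+r-v) = ε v (q+r-v) * ε p (q+r) := by
      have h := hA p v (q+r-v) hpm hvm hqrv
      rw [show v + (q+r-v) = q+r from by abel] at h
      exact h
    have hcm : ε v p = c * ε p v :=
      hεcomm v p hvm hpm n (by rw [hsymm]; exact hn)
    have a1 : ε p q * ε (p+q) r = ε q r * ε p (q+r) := hA p q r hpm hqm hrm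
    have a3h : ε u (p+q-u) * ε (p+q) r = ε (p+q-u) r * ε u (p+q+r-u) := by
      have h := hA u (p+q-u) r hum hpqu hrm
      rw [show u + (p+q-u) = p+q from by abel, show p+q-u+r = p+q+r-u from by abel] at h
      exact h
    have a4h : ε u (v+w-u) * ε (v+w) (p+q+r-v-w)
        = ε (v+w-u) (p+q+r-v-w) * ε u (p+q+r-u) := by
      have h := hA u (v+w-u) (p+q+r-v-w) hum hvwu hZ
      rw [show u + (v+w-u) = v+w from by abel,
        show v+w-u+(p+q+r-v-w) = p+q+r-u from by abel] at h
      exact h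
    have a5h : ε v w * ε (v+w) (p+q+r-v-w) = ε w (p+q+r-v-w) * ε v (p+q+r-v) := by
      have h := hA v w (p+q+r-v-w) hvm hwm hZ
      rw [show w + (p+q+r-v-w) = p+q+r-v from by abel] at h
      exact h
    clear_value c
    have hkey : c * ((ε q r * ε p (q+r-v)) *
        (ε u (p+q-u) * ε (v+w-u) (p+q+r-v-w) * ε v w))
        = (ε p q * ε (p+q-u) r * ε u (v+w-u)) *
          (ε v (q+r-v) * ε w (p+q+r-v-w)) := by
      apply mul_right_cancel₀ (show ε v (p+q+r-v) * ε q r * ε u (p+q+r-u) *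
        ε (v+w) (p+q+r-v-w) ≠ 0 from
        mul_ne_zero (mul_ne_zero (mul_ne_zero (hεne _ _) (hεne _ _)) (hεne _ _)) (hεne _ _))
      rcases hc with hc | hc <;> rw [hc] at hcm ⊢
      · linear_combination
          (ε q r * ε u (p+q-u) * ε (v+w-u) (p+q+r-v-w) * ε v w * ε q r *
            ε u (p+q+r-u) * ε (v+w) (p+q+r-v-w)) * a2b
          + (ε q r * ε u (p+q-u) * ε (v+w-u) (p+q+r-v-w) * ε v w * ε q r *
            ε u (p+q+r-u) * ε (v+w) (p+q+r-v-w) * ε (p+v) (q+r-v)) * hcm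
          - (ε q r * ε u (p+q-u) * ε (v+w-u) (p+q+r-v-w) * ε v w * ε q r *
            ε u (p+q+r-u) * ε (v+w) (p+q+r-v-w)) * a2a
          - (ε q r * ε u (p+q-u) * ε (v+w-u) (p+q+r-v-w) * ε v w *
            ε u (p+q+r-u) * ε (v+w) (p+q+r-v-w) * ε v (q+r-v)) * a1
          + (ε q r * ε (v+w-u) (p+q+r-v-w) * ε v w * ε u (p+q+r-u) *
            ε (v+w) (p+q+r-v-w) * ε v (q+r-v) * ε p q) * a3h
          - (ε q r * ε v w * ε u (p+q+r-u) * ε (v+w) (p+q+r-v-w) *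
            ε v (q+r-v) * ε p q * ε (p+q-u) r) * a4h
          + (ε q r * ε u (p+q+r-u) * ε (v+w) (p+q+r-v-w) * ε v (q+r-v) *
            ε p q * ε (p+q-u) r * ε u (v+w-u)) * a5h
      · linear_combination
          (ε q r * ε u (p+q-u) * ε (v+w-u) (p+q+r-v-w) * ε v w * ε q r *
            ε u (p+q+r-u) * ε (v+w) (p+q+r-v-w)) * a2b
          - (ε q r * ε u (p+q-u) * ε (v+w-u) (p+q+r-v-w) * ε v w * ε q r *
            ε u (p+q+r-u) * ε (v+w) (p+q+r-v-w) * ε (p+v) (q+r-v)) * hcm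
          + (ε q r * ε u (p+q-u) * ε (v+w-u) (p+q+r-v-w) * ε v w * ε q r *
            ε u (p+q+r-u) * ε (v+w) (p+q+r-v-w)) * a2a
          - (ε q r * ε u (p+q-u) * ε (v+w-u) (p+q+r-v-w) * ε v w *
            ε u (p+q+r-u) * ε (v+w) (p+q+r-v-w) * ε v (q+r-v)) * a1
          + (ε q r * ε (v+w-u) (p+q+r-v-w) * ε v w * ε u (p+q+r-u) *
            ε (v+w) (p+q+r-v-w) * ε v (q+r-v) * ε p q) * a3h
          - (ε q r * ε v w * ε u (p+q+r-u) * ε (v+w) (p+q+r-v-w) *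
            ε v (q+r-v) * ε p q * ε (p+q-u) r) * a4h
          + (ε q r * ε u (p+q+r-u) * ε (v+w) (p+q+r-v-w) * ε v (q+r-v) *
            ε p q * ε (p+q-u) r * ε u (v+w-u)) * a5h
    rw [div_mul_div_comm, div_mul_div_comm, div_mul_div_comm,
      div_eq_div_iff (mul_ne_zero (hεne _ _) (hεne _ _))
        (mul_ne_zero (mul_ne_zero (hεne _ _) (hεne _ _)) (hεne _ _))]
    linear_combination (ε q r * ε p (q+r-v) *
        (ε u (p+q-u) * ε (v+w-u) (p+q+r-v-w) * ε v w)) * h1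
      + (Complex.exp ((Real.pi : ℂ) * Complex.I * (B (s α) u : ℝ)) *
        Complex.exp ((Real.pi : ℂ) * Complex.I * (B (s α) (v + w - u) : ℝ)) *
        Complex.exp ((Real.pi : ℂ) * Complex.I * (B (s β) v : ℝ))) * hkey
  · -- hexagon 1
    intro α β γ hα hβ hγ
    simp only [F, k, Ω]
    clear F Ω k
    rw [show β + (γ + α) = α + β + γ from by abel,
        show β + γ + α = α + β + γ from by abel,
        show β + (α + γ) = α + β + γ from by abel,
        show β + α + γ = α + β + γ from by abel,
        show α + (β + γ) = α + β + γ from by abel,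
        show γ + α = α + γ from add_comm γ α,
        show β + α = α + β from add_comm β α]
    rw [show s (α+β) - s β - s α = s (α+β) - s α - s β from by abel,
        show s (α+β+γ) - s (β+γ) - s α = s (α+β+γ) - s α - s (β+γ) from by abel,
        show s (α+γ) - s γ - s α = s (α+γ) - s α - s γ from by abel]
    have hre1 : B (s α) (s (β+γ)) = B (s α) (s γ) + B (s α) (s β)
        + B (s α) (s (β+γ) - s β - s γ) := by
      simp only [map_sub]; ring
    have hph1 : Complex.exp ((Real.pi : ℂ) * Complex.I * (B (s α) (s (β+γ)) : ℝ))
        = Complex.exp ((Real.pi : ℂ) * Complex.I * (B (s α) (s γ) : ℝ)) *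
          Complex.exp ((Real.pi : ℂ) * Complex.I * (B (s α) (s β) : ℝ)) *
          Complex.exp ((Real.pi : ℂ) * Complex.I * (B (s α) (s (β+γ) - s β - s γ) : ℝ)) := by
      rw [← Complex.exp_add, ← Complex.exp_add]
      congr 1
      have hcre := congrArg Complex.ofReal hre1
      push_cast at hcre ⊢
      linear_combination ((Real.pi : ℂ) * Complex.I) * hcre
    rw [hph1]
    field_simp [hεne (s (α+γ) - s α - s γ) (s (α+β+γ) - s β - s (α+γ)),
      hεne (s (β+γ) - s β - s γ) (s (α+β+γ) - s α - s (β+γ)),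
      hεne (s (α+β) - s α - s β) (s (α+β+γ) - s (α+β) - s γ), Complex.exp_ne_zero]
  · -- hexagon 2
    intro α β γ hα hβ hγ
    simp only [F, k, Ω]
    clear F Ω k
    rw [show γ + α + β = α + β + γ from by abel,
        show γ + (α + β) = α + β + γ from by abel,
        show α + (β + γ) = α + β + γ from by abel,
        show α + γ + β = α + β + γ from by abel,
        show α + (γ + β) = α + β + γ from by abel,
        show γ + α = α + γ from add_comm γ α,
        show γ + β = β + γ from add_comm γ β]
    rw [show s (α+β+γ) - s γ - s (α+β) = s (α+β+γ) - s (α+β) - s γ from by abel,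
        show s (β+γ) - s γ - s β = s (β+γ) - s β - s γ from by abel,
        show s (α+γ) - s γ - s α = s (α+γ) - s α - s γ from by abel]
    obtain ⟨z, hz, hz2⟩ := hγ
    have hzl : s γ - z ∈ Λ := by rw [← hz2]; exact hs z
    have hscd : s γ ∈ dual := by
      have h := AddSubgroup.add_mem dual (hΛd hzl) hz
      rwa [sub_add_cancel] at h
    have hPm : s (α+β) - s α - s β ∈ Λ := kmem α β
    obtain ⟨n2, hn2⟩ := (hdual (s γ)).1 hscd _ hPm
    have hre2 : B (s γ) (s (α+β) - s α - s β) + B (s (α+β)) (s γ)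
        = B (s α) (s γ) + B (s β) (s γ) + ((2 * n2 : ℤ) : ℝ) := by
      have h5 : B (s (α+β) - s α - s β) (s γ) = (n2 : ℝ) := by
        rw [← hsymm]; exact hn2
      simp only [map_sub, LinearMap.sub_apply] at h5
      push_cast
      linarith [hn2, h5]
    have h1 : Complex.exp ((Real.pi : ℂ) * Complex.I * (B (s γ) (s (α+β) - s α - s β) : ℝ)) *
        Complex.exp ((Real.pi : ℂ) * Complex.I * (B (s (α+β)) (s γ) : ℝ))
        = Complex.exp ((Real.pi : ℂ) * Complex.I * (B (s α) (s γ) : ℝ)) *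
          Complex.exp ((Real.pi : ℂ) * Complex.I * (B (s β) (s γ) : ℝ)) *
          Complex.exp ((Real.pi : ℂ) * Complex.I * (((2 * n2 : ℤ) : ℝ) : ℂ)) := by
      rw [← Complex.exp_add, ← Complex.exp_add, ← Complex.exp_add]
      congr 1
      have hcre := congrArg Complex.ofReal hre2
      push_cast at hcre ⊢
      linear_combination ((Real.pi : ℂ) * Complex.I) * hcre
    rw [eint (2 * n2)] at h1
    have h2 : (-1 : ℂ) ^ (2 * n2) = 1 := by
      rw [zpow_mul]
      norm_num
    rw [h2, mul_one] at h1
    have hph2' : Complex.exp ((Real.pi : ℂ) * Complex.I * (B (s γ) (s (α+β) - s α - s β) : ℝ))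
        = Complex.exp ((Real.pi : ℂ) * Complex.I * (B (s α) (s γ) : ℝ)) *
          Complex.exp ((Real.pi : ℂ) * Complex.I * (B (s β) (s γ) : ℝ)) /
          Complex.exp ((Real.pi : ℂ) * Complex.I * (B (s (α+β)) (s γ) : ℝ)) := by
      rw [eq_div_iff (Complex.exp_ne_zero _)]
      linear_combination h1
    rw [hph2']
    field_simp [hεne (s (α+β) - s α - s β) (s (α+β+γ) - s (α+β) - s γ),
      hεne (s (β+γ) - s β - s γ) (s (α+β+γ) - s α - s (β+γ)),
      hεne (s (α+γ) - s α - s γ) (s (α+β+γ) - s (α+γ) - s β), Complex.exp_ne_zero]
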